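/- arXiv:math/0602258 — 5 statements merged into one kernel-verified Lean document; each statement's English description precedes it below -/
import Mathlib

section
/- If c = (c_1,c_2,c_3,c_4,c_5) ∈ ℤ⁵ is cohomology-free and c_5 ≥ 1, then c_1 ≥ c_5 − 1, c_2 ≥ 3c_5 − 2, c_3 ≥ 5c_5 − 3, and c_4 ≥ 2c_5 − 1. -/
/-- The primitive ray generators `l₁,…,l₇` of the fan, in counterclockwise order,
acting on `ℤ²` by the dot product. -/
def rayForm : Fin 7 → ℤ × ℤ :=
  ![(1, -1), (2, -1), (3, -1), (1, 0), (0, 1), (-1, 2), (0, -1)]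

/-- Extend `c ∈ ℤ⁵` to seven coefficients by `c₆ = c₇ = 0`. -/
def cExt (c : Fin 5 → ℤ) : Fin 7 → ℤ :=
  fun i => if h : (i : ℕ) < 5 then c ⟨i, h⟩ else 0

/-- `N_c(m) = {i : l_i(m) + c_i < 0}`. -/
def Nset (c : Fin 5 → ℤ) (m : ℤ × ℤ) : Finset (Fin 7) :=
  Finset.univ.filter fun i =>
    (rayForm i).1 * m.1 + (rayForm i).2 * m.2 + cExt c i < 0

open Fin.NatCast in
/-- A subset of the cyclic index set `Fin 7` is a circular interval if it is empty
or of the form `{a, a+1, …, b}` with indices taken modulo 7. -/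
def IsCircularInterval (S : Finset (Fin 7)) : Prop :=
  S = ∅ ∨ ∃ (a : Fin 7) (n : ℕ),
    S = (Finset.range (n + 1)).image fun j : ℕ => a + (j : Fin 7)

/-- `c ∈ ℤ⁵` is cohomology-free if for every `m ∈ ℤ²` and both `ε ∈ {1, -1}`,
the set `N_{εc}(m)` is a circular interval different from the whole index set. -/
def CohomologyFree (c : Fin 5 → ℤ) : Prop :=
  ∀ m : ℤ × ℤ, ∀ ε : ℤ, ε = 1 ∨ ε = -1 →
    IsCircularInterval (Nset (ε • c) m) ∧ Nset (ε • c) m ≠ Finset.univ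


open Fin.NatCast in
lemma mem_ci_iff (a : Fin 7) (n : ℕ) (hn : n ≤ 5) (x : Fin 7) :
    (x ∈ (Finset.range (n+1)).image fun j : ℕ => a + (j : Fin 7)) ↔ (x - a).val ≤ n := by
  simp only [Finset.mem_image, Finset.mem_range]
  constructor
  · rintro ⟨j, hj, rfl⟩
    have h1 : a + (j : Fin 7) - a = (j : Fin 7) := by abel
    rw [h1, Fin.val_natCast]
    exact le_trans (Nat.mod_le _ _) (Nat.lt_succ_iff.mp hj)
  · intro hx
    refine ⟨(x - a).val, Nat.lt_succ_of_le hx, ?_⟩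
    rw [Fin.cast_val_eq_self]
    abel

open Fin.NatCast in
lemma ci_full (a : Fin 7) (n : ℕ) (hn : 6 ≤ n) (x : Fin 7) :
    x ∈ (Finset.range (n+1)).image fun j : ℕ => a + (j : Fin 7) := by
  simp only [Finset.mem_image, Finset.mem_range]
  refine ⟨(x - a).val, Nat.lt_of_lt_of_le (x - a).isLt (by omega), ?_⟩
  rw [Fin.cast_val_eq_self]; abel

lemma not_ci (S : Finset (Fin 7)) (i : Fin 7) (hi : i.val ≤ 3)
    (hm5 : (5 : Fin 7) ∈ S) (hiS : i ∈ S) (h4 : (4 : Fin 7) ∉ S) (h6 : (6 : Fin 7) ∉ S) :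
    ¬ IsCircularInterval S := by
  rintro (rfl | ⟨a, n, rfl⟩)
  · simp at hm5
  · by_cases hn : n ≤ 5
    · rw [mem_ci_iff a n hn] at hm5 hiS h4 h6
      fin_cases a <;> fin_cases i <;> simp_all [Fin.sub_def, Fin.neg_def] <;> omega
    · exact h4 (ci_full a n (by omega) _)

/-- If `c` is cohomology-free and `c₅ ≥ 1`, then `c₁ ≥ c₅ - 1`, `c₂ ≥ 3c₅ - 2`,
`c₃ ≥ 5c₅ - 3` and `c₄ ≥ 2c₅ - 1`. -/
theorem first_general_conditions (c : Fin 5 → ℤ) (h : CohomologyFree c)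
    (h5 : 1 ≤ c 4) :
    c 0 ≥ c 4 - 1 ∧ c 1 ≥ 3 * c 4 - 2 ∧ c 2 ≥ 5 * c 4 - 3 ∧
      c 3 ≥ 2 * c 4 - 1 := by
  set m : ℤ × ℤ := (1 - 2 * c 4, - c 4) with hm
  obtain ⟨hCI, -⟩ := h m 1 (Or.inl rfl)
  rw [one_smul] at hCI
  have hmem : ∀ i : Fin 7, i ∈ Nset c m ↔
      (rayForm i).1 * m.1 + (rayForm i).2 * m.2 + cExt c i < 0 := by
    intro i; simp [Nset]
  have h4' : (4 : Fin 7) ∉ Nset c m := by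
    rw [hmem, show rayForm 4 = (0, 1) from rfl, show cExt c 4 = c 4 from rfl, hm]; omega
  have h6' : (6 : Fin 7) ∉ Nset c m := by
    rw [hmem, show rayForm 6 = (0, -1) from rfl, show cExt c 6 = 0 from rfl, hm]; omega
  have h5' : (5 : Fin 7) ∈ Nset c m := by
    rw [hmem, show rayForm 5 = (-1, 2) from rfl, show cExt c 5 = 0 from rfl, hm]; omega
  refine ⟨?_, ?_, ?_, ?_⟩
  · by_contra hc
    exact not_ci _ 0 (by decide) h5' (by rw [hmem, show rayForm 0 = (1, -1) from rfl, show cExt c 0 = c 0 from rfl, hm]; omega) h4' h6' hCI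
  · by_contra hc
    exact not_ci _ 1 (by decide) h5' (by rw [hmem, show rayForm 1 = (2, -1) from rfl, show cExt c 1 = c 1 from rfl, hm]; omega) h4' h6' hCI
  · by_contra hc
    exact not_ci _ 2 (by decide) h5' (by rw [hmem, show rayForm 2 = (3, -1) from rfl, show cExt c 2 = c 2 from rfl, hm]; omega) h4' h6' hCI
  · by_contra hc
    exact not_ci _ 3 (by decide) h5' (by rw [hmem, show rayForm 3 = (1, 0) from rfl, show cExt c 3 = c 3 from rfl, hm]; omega) h4' h6' hCI
end

section
/- There is no cohomology-free vector c = (c_1,c_2,c_3,c_4,c_5) ∈ ℤ⁵ with c_5 = 3. -/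
open Fin.NatCast in
lemma arc_univ (a : Fin 7) (n : ℕ) (hn : 6 ≤ n) :
    (Finset.range (n + 1)).image (fun j : ℕ => a + (j : Fin 7)) = Finset.univ := by
  apply Finset.eq_univ_of_forall
  intro x
  simp only [Finset.mem_image, Finset.mem_range]
  refine ⟨((x - a : Fin 7) : ℕ), by have := (x - a).isLt; omega, ?_⟩
  rw [Fin.cast_val_eq_self]
  exact add_sub_cancel a x

lemma arc_through_six (S : Finset (Fin 7)) (h : IsCircularInterval S)
    (hu : S ≠ Finset.univ)
    (h4 : (4 : Fin 7) ∈ S) (h6 : (6 : Fin 7) ∈ S) (h5 : (5 : Fin 7) ∉ S) :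
    (0 : Fin 7) ∈ S ∧ (1 : Fin 7) ∈ S ∧ (2 : Fin 7) ∈ S ∧ (3 : Fin 7) ∈ S := by
  rcases h with rfl | ⟨a, n, rfl⟩
  · simp at h4
  · by_cases hn : n ≤ 5
    · interval_cases n <;> fin_cases a <;> revert h4 h6 h5 <;> decide
    · exact absurd (arc_univ a n (by omega)) hu

/-- There is no cohomology-free vector with `c₅ = 3`. -/
theorem no_cohomologyFree_c5_eq_three :
    ¬ ∃ c : Fin 5 → ℤ, CohomologyFree c ∧ c 4 = 3 := by
  rintro ⟨c, hc, hc4⟩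
  obtain ⟨h1i, h1u⟩ := hc (4, 2) (-1) (Or.inr rfl)
  obtain ⟨-, h2u⟩ := hc (3, 1) (-1) (Or.inr rfl)
  have m4 : (4 : Fin 7) ∈ Nset ((-1 : ℤ) • c) (4, 2) :=
    Finset.mem_filter.mpr ⟨Finset.mem_univ _,
      show (0 : ℤ) * 4 + 1 * 2 + (-1 * c 4) < 0 by omega⟩
  have m6 : (6 : Fin 7) ∈ Nset ((-1 : ℤ) • c) (4, 2) :=
    Finset.mem_filter.mpr ⟨Finset.mem_univ _,
      show (0 : ℤ) * 4 + (-1) * 2 + 0 < 0 by omega⟩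
  have m5 : (5 : Fin 7) ∉ Nset ((-1 : ℤ) • c) (4, 2) := by
    intro h
    have h' : (-1 : ℤ) * 4 + 2 * 2 + 0 < 0 := (Finset.mem_filter.mp h).2
    omega
  obtain ⟨m0, m1, m2, m3⟩ := arc_through_six _ h1i h1u m4 m6 m5
  have n0 : (1 : ℤ) * 4 + (-1) * 2 + (-1 * c 0) < 0 := (Finset.mem_filter.mp m0).2
  have n1 : (2 : ℤ) * 4 + (-1) * 2 + (-1 * c 1) < 0 := (Finset.mem_filter.mp m1).2
  have n2 : (3 : ℤ) * 4 + (-1) * 2 + (-1 * c 2) < 0 := (Finset.mem_filter.mp m2).2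
  have n3 : (1 : ℤ) * 4 + 0 * 2 + (-1 * c 3) < 0 := (Finset.mem_filter.mp m3).2
  apply h2u
  apply Finset.eq_univ_of_forall
  intro i
  fin_cases i
  · exact Finset.mem_filter.mpr ⟨Finset.mem_univ _,
      show (1 : ℤ) * 3 + (-1) * 1 + (-1 * c 0) < 0 by omega⟩
  · exact Finset.mem_filter.mpr ⟨Finset.mem_univ _,
      show (2 : ℤ) * 3 + (-1) * 1 + (-1 * c 1) < 0 by omega⟩
  · exact Finset.mem_filter.mpr ⟨Finset.mem_univ _,
      show (3 : ℤ) * 3 + (-1) * 1 + (-1 * c 2) < 0 by omega⟩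
  · exact Finset.mem_filter.mpr ⟨Finset.mem_univ _,
      show (1 : ℤ) * 3 + 0 * 1 + (-1 * c 3) < 0 by omega⟩
  · exact Finset.mem_filter.mpr ⟨Finset.mem_univ _,
      show (0 : ℤ) * 3 + 1 * 1 + (-1 * c 4) < 0 by omega⟩
  · exact Finset.mem_filter.mpr ⟨Finset.mem_univ _,
      show (-1 : ℤ) * 3 + 2 * 1 + 0 < 0 by omega⟩
  · exact Finset.mem_filter.mpr ⟨Finset.mem_univ _,
      show (0 : ℤ) * 3 + (-1) * 1 + 0 < 0 by omega⟩
end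

section
/- A vector c = (c_1,c_2,c_3,c_4,c_5) ∈ ℤ⁵ with c_5 = 2 and c_4 = 3 is cohomology-free if and only if c is one of the seven tuples (2,4,7,3,2), (2,5,7,3,2), (2,5,8,3,2), (3,5,7,3,2), (3,5,8,3,2), (3,6,8,3,2), (3,6,9,3,2). -/
/-! ### Auxiliary machinery -/

def condL (c : Fin 5 → ℤ) (m : ℤ × ℤ) (i : Fin 7) : Prop :=
  (rayForm i).1 * m.1 + (rayForm i).2 * m.2 + cExt c i < 0

instance (c : Fin 5 → ℤ) (m : ℤ × ℤ) : DecidablePred (condL c m) := fun _ => by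
  unfold condL; infer_instance

lemma mem_Nset {c : Fin 5 → ℤ} {m : ℤ × ℤ} {i : Fin 7} :
    i ∈ Nset c m ↔ condL c m i := by
  simp [Nset, condL]

abbrev Good (S : Finset (Fin 7)) : Prop :=
  ∀ i j : Fin 7, i ≠ j → ¬(i ∈ S ∧ i+1 ∉ S ∧ j ∈ S ∧ j+1 ∉ S)

open Fin.NatCast in
abbrev CircB (S : Finset (Fin 7)) : Prop :=
  S = ∅ ∨ ∃ (a : Fin 7) (n : Fin 7),
    S = (Finset.range ((n : ℕ) + 1)).image fun j : ℕ => a + (j : Fin 7)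

set_option maxRecDepth 10000 in
lemma circB_iff_good : ∀ S : Finset (Fin 7), CircB S ↔ Good S := by decide

lemma circ_iff (S : Finset (Fin 7)) : IsCircularInterval S ↔ CircB S := by
  constructor
  · rintro (h | ⟨a, n, h⟩)
    · exact Or.inl h
    · by_cases hn : n ≤ 6
      · exact Or.inr ⟨a, ⟨n, by omega⟩, h⟩
      · refine Or.inr ⟨0, (6 : Fin 7), ?_⟩
        have hS : S = Finset.univ := by
          rw [h]
          apply Finset.eq_univ_of_forall
          intro x
          refine Finset.mem_image.2 ⟨((x - a : Fin 7) : ℕ), ?_, ?_⟩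
          · exact Finset.mem_range.2 (by omega)
          · rw [Fin.cast_val_eq_self]
            exact add_sub_cancel a x
        rw [hS]
        decide
  · rintro (h | ⟨a, n, h⟩)
    · exact Or.inl h
    · exact Or.inr ⟨a, (n : ℕ), h⟩

def DescFree (q : Fin 7 → Prop) : Prop :=
  ¬(q 0 ∧ ¬q 1 ∧ q 1 ∧ ¬q 2) ∧
  ¬(q 0 ∧ ¬q 1 ∧ q 2 ∧ ¬q 3) ∧
  ¬(q 0 ∧ ¬q 1 ∧ q 3 ∧ ¬q 4) ∧
  ¬(q 0 ∧ ¬q 1 ∧ q 4 ∧ ¬q 5) ∧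
  ¬(q 0 ∧ ¬q 1 ∧ q 5 ∧ ¬q 6) ∧
  ¬(q 0 ∧ ¬q 1 ∧ q 6 ∧ ¬q 0) ∧
  ¬(q 1 ∧ ¬q 2 ∧ q 2 ∧ ¬q 3) ∧
  ¬(q 1 ∧ ¬q 2 ∧ q 3 ∧ ¬q 4) ∧
  ¬(q 1 ∧ ¬q 2 ∧ q 4 ∧ ¬q 5) ∧
  ¬(q 1 ∧ ¬q 2 ∧ q 5 ∧ ¬q 6) ∧
  ¬(q 1 ∧ ¬q 2 ∧ q 6 ∧ ¬q 0) ∧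
  ¬(q 2 ∧ ¬q 3 ∧ q 3 ∧ ¬q 4) ∧
  ¬(q 2 ∧ ¬q 3 ∧ q 4 ∧ ¬q 5) ∧
  ¬(q 2 ∧ ¬q 3 ∧ q 5 ∧ ¬q 6) ∧
  ¬(q 2 ∧ ¬q 3 ∧ q 6 ∧ ¬q 0) ∧
  ¬(q 3 ∧ ¬q 4 ∧ q 4 ∧ ¬q 5) ∧
  ¬(q 3 ∧ ¬q 4 ∧ q 5 ∧ ¬q 6) ∧
  ¬(q 3 ∧ ¬q 4 ∧ q 6 ∧ ¬q 0) ∧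
  ¬(q 4 ∧ ¬q 5 ∧ q 5 ∧ ¬q 6) ∧
  ¬(q 4 ∧ ¬q 5 ∧ q 6 ∧ ¬q 0) ∧
  ¬(q 5 ∧ ¬q 6 ∧ q 6 ∧ ¬q 0)

set_option maxRecDepth 10000 in
set_option synthInstance.maxSize 4000 in
set_option synthInstance.maxHeartbeats 1000000 in
instance (q : Fin 7 → Prop) [DecidablePred q] : Decidable (DescFree q) := by
  unfold DescFree; infer_instance

set_option maxRecDepth 10000 in
lemma boolPair : ∀ p : Fin 7 → Bool, DescFree (fun i => p i) →
    ∀ i j : Fin 7, i ≠ j → ¬((p i : Prop) ∧ ¬(p (i+1) : Prop) ∧ (p j : Prop) ∧ ¬(p (j+1) : Prop)) := by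
  decide

lemma pairlemma (q : Fin 7 → Prop) [DecidablePred q] (h : DescFree q) :
    ∀ i j : Fin 7, i ≠ j → ¬(q i ∧ ¬q (i+1) ∧ q j ∧ ¬q (j+1)) := by
  have hb := boolPair (fun i => decide (q i))
  simp only [decide_eq_true_eq] at hb
  exact hb h

lemma crux (c : Fin 5 → ℤ) (m : ℤ × ℤ)
    (h : DescFree (condL c m)) (h2 : ¬ ∀ i, condL c m i) :
    IsCircularInterval (Nset c m) ∧ Nset c m ≠ Finset.univ := by
  have hg : Good (Nset c m) := by
    intro i j hij hx
    exact pairlemma (condL c m) h i j hij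
      ⟨mem_Nset.1 hx.1, fun w => hx.2.1 (mem_Nset.2 w),
       mem_Nset.1 hx.2.2.1, fun w => hx.2.2.2 (mem_Nset.2 w)⟩
  refine ⟨(circ_iff _).2 ((circB_iff_good _).2 hg), fun he => h2 fun i => ?_⟩
  exact mem_Nset.1 (he ▸ Finset.mem_univ i)

lemma extract (c : Fin 5 → ℤ) (m : ℤ × ℤ) (h : IsCircularInterval (Nset c m)) :
    ∀ i j : Fin 7, i ≠ j → ¬(condL c m i ∧ ¬condL c m (i+1) ∧ condL c m j ∧ ¬condL c m (j+1)) := by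
  have hg : Good (Nset c m) := (circB_iff_good _).1 ((circ_iff _).1 h)
  intro i j hij hx
  exact hg i j hij ⟨mem_Nset.2 hx.1, fun w => hx.2.1 (mem_Nset.1 w),
    mem_Nset.2 hx.2.2.1, fun w => hx.2.2.2 (mem_Nset.1 w)⟩

lemma condL0 (c : Fin 5 → ℤ) (m1 m2 : ℤ) : condL c (m1, m2) 0 ↔ 1 * m1 + (-1) * m2 + c 0 < 0 := Iff.rfl
lemma condL1 (c : Fin 5 → ℤ) (m1 m2 : ℤ) : condL c (m1, m2) 1 ↔ 2 * m1 + (-1) * m2 + c 1 < 0 := Iff.rfl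
lemma condL2 (c : Fin 5 → ℤ) (m1 m2 : ℤ) : condL c (m1, m2) 2 ↔ 3 * m1 + (-1) * m2 + c 2 < 0 := Iff.rfl
lemma condL3 (c : Fin 5 → ℤ) (m1 m2 : ℤ) : condL c (m1, m2) 3 ↔ 1 * m1 + 0 * m2 + c 3 < 0 := Iff.rfl
lemma condL4 (c : Fin 5 → ℤ) (m1 m2 : ℤ) : condL c (m1, m2) 4 ↔ 0 * m1 + 1 * m2 + c 4 < 0 := Iff.rfl
lemma condL5 (c : Fin 5 → ℤ) (m1 m2 : ℤ) : condL c (m1, m2) 5 ↔ (-1) * m1 + 2 * m2 + 0 < 0 := Iff.rfl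
lemma condL6 (c : Fin 5 → ℤ) (m1 m2 : ℤ) : condL c (m1, m2) 6 ↔ 0 * m1 + (-1) * m2 + 0 < 0 := Iff.rfl

lemma succ0 : (0:Fin 7)+1 = 1 := rfl
lemma succ1 : (1:Fin 7)+1 = 2 := rfl
lemma succ2 : (2:Fin 7)+1 = 3 := rfl
lemma succ3 : (3:Fin 7)+1 = 4 := rfl
lemma succ4 : (4:Fin 7)+1 = 5 := rfl
lemma succ5 : (5:Fin 7)+1 = 6 := rfl
lemma succ6 : (6:Fin 7)+1 = 0 := rfl

lemma eq_vec (c : Fin 5 → ℤ) (h5 : c 4 = 2) (h4 : c 3 = 3) (x y z : ℤ) :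
    c = ![x, y, z, 3, 2] ↔ (c 0 = x ∧ c 1 = y ∧ c 2 = z) := by
  constructor
  · intro h; rw [h]; refine ⟨rfl, rfl, rfl⟩
  · rintro ⟨h0, h1, h2⟩
    funext i
    fin_cases i <;> simp [h0, h1, h2, h4, h5]

set_option maxHeartbeats 8000000 in
/-- Classification of cohomology-free vectors with `c₅ = 2` and `c₄ = 3`. -/
theorem classification_c5_two_c4_three (c : Fin 5 → ℤ) (h5 : c 4 = 2)
    (h4 : c 3 = 3) :
    CohomologyFree c ↔
      c = ![2,4,7,3,2] ∨ c = ![2,5,7,3,2] ∨ c = ![2,5,8,3,2] ∨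
      c = ![3,5,7,3,2] ∨ c = ![3,5,8,3,2] ∨ c = ![3,6,8,3,2] ∨
      c = ![3,6,9,3,2] := by
  constructor
  · intro h
    have w0 := extract _ _ (h ((-3, -2) : ℤ × ℤ) 1 (Or.inl rfl)).1 2 5 (by decide)
    simp only [succ0, succ1, succ2, succ3, succ4, succ5, succ6, condL0, condL1, condL2, condL3,
      condL4, condL5, condL6, Pi.smul_apply, smul_eq_mul, h4, h5] at w0
    have v0 : 7 ≤ c 2 := by omega
    clear w0
    have w1 := extract _ _ (h ((3, 0) : ℤ × ℤ) (-1) (Or.inr rfl)).1 2 5 (by decide)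
    simp only [succ0, succ1, succ2, succ3, succ4, succ5, succ6, condL0, condL1, condL2, condL3,
      condL4, condL5, condL6, Pi.smul_apply, smul_eq_mul, h4, h5] at w1
    have v1 : c 2 ≤ 9 := by omega
    clear w1
    have w2 := extract _ _ (h ((-3, -2) : ℤ × ℤ) 1 (Or.inl rfl)).1 1 5 (by decide)
    simp only [succ0, succ1, succ2, succ3, succ4, succ5, succ6, condL0, condL1, condL2, condL3,
      condL4, condL5, condL6, Pi.smul_apply, smul_eq_mul, h4, h5] at w2
    have v2 : 4 ≤ c 1 := by omega
    clear w2
    have w3 := extract _ _ (h ((3, 0) : ℤ × ℤ) (-1) (Or.inr rfl)).1 1 5 (by decide)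
    simp only [succ0, succ1, succ2, succ3, succ4, succ5, succ6, condL0, condL1, condL2, condL3,
      condL4, condL5, condL6, Pi.smul_apply, smul_eq_mul, h4, h5] at w3
    have v3 : c 1 ≤ 6 := by omega
    clear w3
    have w4 := extract _ _ (h ((2, 1) : ℤ × ℤ) (-1) (Or.inr rfl)).1 4 6 (by decide)
    simp only [succ0, succ1, succ2, succ3, succ4, succ5, succ6, condL0, condL1, condL2, condL3,
      condL4, condL5, condL6, Pi.smul_apply, smul_eq_mul, h4, h5] at w4
    have v4 : 2 ≤ c 0 := by omega
    clear w4
    have w5 := extract _ _ (h ((-3, 1) : ℤ × ℤ) 1 (Or.inl rfl)).1 2 6 (by decide)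
    simp only [succ0, succ1, succ2, succ3, succ4, succ5, succ6, condL0, condL1, condL2, condL3,
      condL4, condL5, condL6, Pi.smul_apply, smul_eq_mul, h4, h5] at w5
    have v5 : c 0 ≤ 3 := by omega
    clear w5
    have w6 := extract _ _ (h ((3, 2) : ℤ × ℤ) (-1) (Or.inr rfl)).1 0 2 (by decide)
    simp only [succ0, succ1, succ2, succ3, succ4, succ5, succ6, condL0, condL1, condL2, condL3,
      condL4, condL5, condL6, Pi.smul_apply, smul_eq_mul, h4, h5] at w6
    have v6 : 5 ≤ c 1 ∨ c 2 ≤ 7 := by omega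
    clear w6
    have w7 := extract _ _ (h ((-3, 0) : ℤ × ℤ) 1 (Or.inl rfl)).1 0 2 (by decide)
    simp only [succ0, succ1, succ2, succ3, succ4, succ5, succ6, condL0, condL1, condL2, condL3,
      condL4, condL5, condL6, Pi.smul_apply, smul_eq_mul, h4, h5] at w7
    have v7 : 3 ≤ c 0 ∨ c 1 ≤ 5 ∨ 9 ≤ c 2 := by omega
    clear w7
    have w8 := extract _ _ (h ((3, 1) : ℤ × ℤ) (-1) (Or.inr rfl)).1 2 6 (by decide)
    simp only [succ0, succ1, succ2, succ3, succ4, succ5, succ6, condL0, condL1, condL2, condL3,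
      condL4, condL5, condL6, Pi.smul_apply, smul_eq_mul, h4, h5] at w8
    have v8 : c 2 ≤ 8 ∨ 3 ≤ c 0 := by omega
    clear w8
    have w9 := extract _ _ (h ((-2, 1) : ℤ × ℤ) 1 (Or.inl rfl)).1 1 6 (by decide)
    simp only [succ0, succ1, succ2, succ3, succ4, succ5, succ6, condL0, condL1, condL2, condL3,
      condL4, condL5, condL6, Pi.smul_apply, smul_eq_mul, h4, h5] at w9
    have v9 : 5 ≤ c 1 ∨ c 0 ≤ 2 := by omega
    clear w9
    have w10 := extract _ _ (h ((-2, 2) : ℤ × ℤ) 1 (Or.inl rfl)).1 0 2 (by decide)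
    simp only [succ0, succ1, succ2, succ3, succ4, succ5, succ6, condL0, condL1, condL2, condL3,
      condL4, condL5, condL6, Pi.smul_apply, smul_eq_mul, h4, h5] at w10
    have v10 : c 1 ≤ 5 ∨ 8 ≤ c 2 := by omega
    clear w10
    have w11 := extract _ _ (h ((3, 1) : ℤ × ℤ) (-1) (Or.inr rfl)).1 0 2 (by decide)
    simp only [succ0, succ1, succ2, succ3, succ4, succ5, succ6, condL0, condL1, condL2, condL3,
      condL4, condL5, condL6, Pi.smul_apply, smul_eq_mul, h4, h5] at w11
    have v11 : c 0 ≤ 2 ∨ 6 ≤ c 1 ∨ c 2 ≤ 8 := by omega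
    clear w11
    simp only [eq_vec c h5 h4]
    omega
  · intro hc
    have hC : (c 0 = 2 ∧ c 1 = 4 ∧ c 2 = 7) ∨ (c 0 = 2 ∧ c 1 = 5 ∧ c 2 = 7) ∨
        (c 0 = 2 ∧ c 1 = 5 ∧ c 2 = 8) ∨ (c 0 = 3 ∧ c 1 = 5 ∧ c 2 = 7) ∨
        (c 0 = 3 ∧ c 1 = 5 ∧ c 2 = 8) ∨ (c 0 = 3 ∧ c 1 = 6 ∧ c 2 = 8) ∨
        (c 0 = 3 ∧ c 1 = 6 ∧ c 2 = 9) := by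
      rcases hc with h|h|h|h|h|h|h <;>
        [exact Or.inl ((eq_vec c h5 h4 _ _ _).1 h);
         exact Or.inr (Or.inl ((eq_vec c h5 h4 _ _ _).1 h));
         exact Or.inr (Or.inr (Or.inl ((eq_vec c h5 h4 _ _ _).1 h)));
         exact Or.inr (Or.inr (Or.inr (Or.inl ((eq_vec c h5 h4 _ _ _).1 h))));
         exact Or.inr (Or.inr (Or.inr (Or.inr (Or.inl ((eq_vec c h5 h4 _ _ _).1 h)))));
         exact Or.inr (Or.inr (Or.inr (Or.inr (Or.inr (Or.inl ((eq_vec c h5 h4 _ _ _).1 h))))));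
         exact Or.inr (Or.inr (Or.inr (Or.inr (Or.inr (Or.inr ((eq_vec c h5 h4 _ _ _).1 h))))))]
    rintro ⟨m1, m2⟩ ε hε
    rcases hε with rfl | rfl <;>
      refine crux _ (m1, m2) ?_ (fun hall => ?_)
    · unfold DescFree
      simp only [succ0, succ1, succ2, succ3, succ4, succ5, succ6, condL0, condL1, condL2, condL3, condL4, condL5, condL6,
        Pi.smul_apply, smul_eq_mul]
      refine ⟨?_, ?_, ?_, ?_, ?_, ?_, ?_, ?_, ?_, ?_, ?_, ?_, ?_, ?_, ?_, ?_, ?_, ?_, ?_, ?_, ?_⟩ <;> omega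
    · have g0 := hall 0; have g1 := hall 1; have g2 := hall 2; have g3 := hall 3
      have g4 := hall 4; have g5 := hall 5; have g6 := hall 6
      simp only [condL0, condL1, condL2, condL3, condL4, condL5, condL6,
        Pi.smul_apply, smul_eq_mul] at g0 g1 g2 g3 g4 g5 g6
      omega
    · unfold DescFree
      simp only [succ0, succ1, succ2, succ3, succ4, succ5, succ6, condL0, condL1, condL2, condL3, condL4, condL5, condL6,
        Pi.smul_apply, smul_eq_mul]
      refine ⟨?_, ?_, ?_, ?_, ?_, ?_, ?_, ?_, ?_, ?_, ?_, ?_, ?_, ?_, ?_, ?_, ?_, ?_, ?_, ?_, ?_⟩ <;> omega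
    · have g0 := hall 0; have g1 := hall 1; have g2 := hall 2; have g3 := hall 3
      have g4 := hall 4; have g5 := hall 5; have g6 := hall 6
      simp only [condL0, condL1, condL2, condL3, condL4, condL5, condL6,
        Pi.smul_apply, smul_eq_mul] at g0 g1 g2 g3 g4 g5 g6
      omega
end

section
/- If c = (c_1,c_2,c_3,c_4,c_5) ∈ ℤ⁵ is cohomology-free with c_5 = 2 and c_4 = 4, then 2 ≤ c_1 ≤ 4, 5 ≤ c_2 ≤ 8, 9 ≤ c_3 ≤ 12, and moreover c_1 = 2 or c_2 = 5. -/
/- ### Auxiliary machinery -/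

open Fin.NatCast in
def arcOf (a : Fin 7) (n : ℕ) : Finset (Fin 7) :=
  (Finset.range (n + 1)).image fun j : ℕ => a + (j : Fin 7)

lemma arcOf_large (a : Fin 7) {n : ℕ} (hn : 6 ≤ n) : arcOf a n = Finset.univ := by
  apply Finset.eq_univ_iff_forall.mpr
  intro x
  refine Finset.mem_image.mpr ⟨(x - a).val, Finset.mem_range.mpr ?_, ?_⟩
  · exact lt_of_lt_of_le (x - a).isLt (by omega)
  · rw [Fin.cast_val_eq_self]; abel

lemma interval_small {S : Finset (Fin 7)} (h : IsCircularInterval S) :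
    S = ∅ ∨ S = Finset.univ ∨ ∃ (a : Fin 7) (n : Fin 7), S = arcOf a n.val := by
  rcases h with h | ⟨a, n, h⟩
  · exact Or.inl h
  by_cases hn : n ≤ 6
  · exact Or.inr (Or.inr ⟨a, ⟨n, by omega⟩, h⟩)
  · exact Or.inr (Or.inl (h.trans (arcOf_large a (by omega))))

lemma Nset_mem (c : Fin 5 → ℤ) (m : ℤ × ℤ) (i : Fin 7) :
    i ∈ Nset c m ↔ (rayForm i).1 * m.1 + (rayForm i).2 * m.2 + cExt c i < 0 := by
  simp [Nset]

/-- If a circular interval other than `univ` contains `i` and `j` but avoids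
`x` and `y`, and no small arc has that pattern, contradiction. -/
lemma no_arc {i j x y : Fin 7}
    (hd : ∀ a n : Fin 7, ¬(i ∈ arcOf a n.val ∧ j ∈ arcOf a n.val ∧
        x ∉ arcOf a n.val ∧ y ∉ arcOf a n.val))
    {S : Finset (Fin 7)} (hCI : IsCircularInterval S) (hSu : S ≠ Finset.univ)
    (hi : i ∈ S) (hj : j ∈ S) (hx : x ∉ S) (hy : y ∉ S) : False := by
  rcases interval_small hCI with h | h | ⟨a, n, h⟩
  · rw [h] at hi; exact absurd hi (Finset.notMem_empty i)
  · exact hSu h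
  · subst h; exact hd a n ⟨hi, hj, hx, hy⟩

lemma pat36 : ∀ a n : Fin 7, ¬((3 : Fin 7) ∈ arcOf a n.val ∧ (6 : Fin 7) ∈ arcOf a n.val ∧
    (0 : Fin 7) ∉ arcOf a n.val ∧ (5 : Fin 7) ∉ arcOf a n.val) := by decide

lemma pat40 : ∀ a n : Fin 7, ¬((4 : Fin 7) ∈ arcOf a n.val ∧ (0 : Fin 7) ∈ arcOf a n.val ∧
    (3 : Fin 7) ∉ arcOf a n.val ∧ (6 : Fin 7) ∉ arcOf a n.val) := by decide

lemma pat41 : ∀ a n : Fin 7, ¬((4 : Fin 7) ∈ arcOf a n.val ∧ (1 : Fin 7) ∈ arcOf a n.val ∧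
    (3 : Fin 7) ∉ arcOf a n.val ∧ (6 : Fin 7) ∉ arcOf a n.val) := by decide

lemma pat42 : ∀ a n : Fin 7, ¬((4 : Fin 7) ∈ arcOf a n.val ∧ (2 : Fin 7) ∈ arcOf a n.val ∧
    (3 : Fin 7) ∉ arcOf a n.val ∧ (6 : Fin 7) ∉ arcOf a n.val) := by decide

/-- If `c` is cohomology-free with `c₅ = 2` and `c₄ = 4`, then `2 ≤ c₁ ≤ 4`,
`5 ≤ c₂ ≤ 8`, `9 ≤ c₃ ≤ 12`, and `c₁ = 2` or `c₂ = 5`. -/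
theorem bounds_c5_two_c4_four (c : Fin 5 → ℤ) (h : CohomologyFree c)
    (h5 : c 4 = 2) (h4 : c 3 = 4) :
    (2 ≤ c 0 ∧ c 0 ≤ 4) ∧ (5 ≤ c 1 ∧ c 1 ≤ 8) ∧ (9 ≤ c 2 ∧ c 2 ≤ 12) ∧
      (c 0 = 2 ∨ c 1 = 5) := by
  -- Lower bound c 0 ≥ 2, witness ε = -1, m = (2,1)
  have hc0lo : 2 ≤ c 0 := by
    by_contra hlt
    push_neg at hlt
    obtain ⟨hCI, hSu⟩ := h (2, 1) (-1) (Or.inr rfl)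
    refine no_arc pat36 hCI hSu ?_ ?_ ?_ ?_
    · rw [Nset_mem, show rayForm 3 = (1, 0) from rfl,
        show cExt ((-1 : ℤ) • c) 3 = -1 * c 3 from rfl, h4]; norm_num
    · rw [Nset_mem, show rayForm 6 = (0, -1) from rfl,
        show cExt ((-1 : ℤ) • c) 6 = 0 from rfl]; norm_num
    · rw [Nset_mem, show rayForm 0 = (1, -1) from rfl,
        show cExt ((-1 : ℤ) • c) 0 = -1 * c 0 from rfl]; omega
    · rw [Nset_mem, show rayForm 5 = (-1, 2) from rfl,
        show cExt ((-1 : ℤ) • c) 5 = 0 from rfl]; norm_num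
  -- Upper bounds, witness ε = -1, m = (4,0)
  obtain ⟨hCI4, hSu4⟩ := h (4, 0) (-1) (Or.inr rfl)
  have h4in : (4 : Fin 7) ∈ Nset ((-1 : ℤ) • c) (4, 0) := by
    rw [Nset_mem, show rayForm 4 = (0, 1) from rfl,
      show cExt ((-1 : ℤ) • c) 4 = -1 * c 4 from rfl, h5]; norm_num
  have h3out : (3 : Fin 7) ∉ Nset ((-1 : ℤ) • c) (4, 0) := by
    rw [Nset_mem, show rayForm 3 = (1, 0) from rfl,
      show cExt ((-1 : ℤ) • c) 3 = -1 * c 3 from rfl, h4]; norm_num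
  have h6out : (6 : Fin 7) ∉ Nset ((-1 : ℤ) • c) (4, 0) := by
    rw [Nset_mem, show rayForm 6 = (0, -1) from rfl,
      show cExt ((-1 : ℤ) • c) 6 = 0 from rfl]; norm_num
  have hc0hi : c 0 ≤ 4 := by
    by_contra hlt
    push_neg at hlt
    refine no_arc pat40 hCI4 hSu4 h4in ?_ h3out h6out
    rw [Nset_mem, show rayForm 0 = (1, -1) from rfl,
      show cExt ((-1 : ℤ) • c) 0 = -1 * c 0 from rfl]; omega
  have hc1hi : c 1 ≤ 8 := by
    by_contra hlt
    push_neg at hlt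
    refine no_arc pat41 hCI4 hSu4 h4in ?_ h3out h6out
    rw [Nset_mem, show rayForm 1 = (2, -1) from rfl,
      show cExt ((-1 : ℤ) • c) 1 = -1 * c 1 from rfl]; omega
  have hc2hi : c 2 ≤ 12 := by
    by_contra hlt
    push_neg at hlt
    refine no_arc pat42 hCI4 hSu4 h4in ?_ h3out h6out
    rw [Nset_mem, show rayForm 2 = (3, -1) from rfl,
      show cExt ((-1 : ℤ) • c) 2 = -1 * c 2 from rfl]; omega
  -- Lower bounds for c 1, c 2, witness ε = 1, m = (-4,-3)
  obtain ⟨hCI1, hSu1⟩ := h (-4, -3) 1 (Or.inl rfl)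
  have h4in' : (4 : Fin 7) ∈ Nset ((1 : ℤ) • c) (-4, -3) := by
    rw [Nset_mem, show rayForm 4 = (0, 1) from rfl,
      show cExt ((1 : ℤ) • c) 4 = 1 * c 4 from rfl, h5]; norm_num
  have h3out' : (3 : Fin 7) ∉ Nset ((1 : ℤ) • c) (-4, -3) := by
    rw [Nset_mem, show rayForm 3 = (1, 0) from rfl,
      show cExt ((1 : ℤ) • c) 3 = 1 * c 3 from rfl, h4]; norm_num
  have h6out' : (6 : Fin 7) ∉ Nset ((1 : ℤ) • c) (-4, -3) := by
    rw [Nset_mem, show rayForm 6 = (0, -1) from rfl,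
      show cExt ((1 : ℤ) • c) 6 = 0 from rfl]; norm_num
  have hc1lo : 5 ≤ c 1 := by
    by_contra hlt
    push_neg at hlt
    refine no_arc pat41 hCI1 hSu1 h4in' ?_ h3out' h6out'
    rw [Nset_mem, show rayForm 1 = (2, -1) from rfl,
      show cExt ((1 : ℤ) • c) 1 = 1 * c 1 from rfl]; omega
  have hc2lo : 9 ≤ c 2 := by
    by_contra hlt
    push_neg at hlt
    refine no_arc pat42 hCI1 hSu1 h4in' ?_ h3out' h6out'
    rw [Nset_mem, show rayForm 2 = (3, -1) from rfl,
      show cExt ((1 : ℤ) • c) 2 = 1 * c 2 from rfl]; omega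
  -- The disjunction: witness ε = -1, m = (3,1) makes N = univ if c0 ≥ 3 and c1 ≥ 6
  have hdisj : c 0 = 2 ∨ c 1 = 5 := by
    by_contra hor
    push_neg at hor
    have hc0 : 3 ≤ c 0 := by omega
    have hc1 : 6 ≤ c 1 := by omega
    obtain ⟨_, hSu3⟩ := h (3, 1) (-1) (Or.inr rfl)
    apply hSu3
    have m0 : (0 : Fin 7) ∈ Nset ((-1 : ℤ) • c) (3, 1) := by
      rw [Nset_mem, show rayForm 0 = (1, -1) from rfl,
        show cExt ((-1 : ℤ) • c) 0 = -1 * c 0 from rfl]; omega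
    have m1 : (1 : Fin 7) ∈ Nset ((-1 : ℤ) • c) (3, 1) := by
      rw [Nset_mem, show rayForm 1 = (2, -1) from rfl,
        show cExt ((-1 : ℤ) • c) 1 = -1 * c 1 from rfl]; omega
    have m2 : (2 : Fin 7) ∈ Nset ((-1 : ℤ) • c) (3, 1) := by
      rw [Nset_mem, show rayForm 2 = (3, -1) from rfl,
        show cExt ((-1 : ℤ) • c) 2 = -1 * c 2 from rfl]; omega
    have m3 : (3 : Fin 7) ∈ Nset ((-1 : ℤ) • c) (3, 1) := by
      rw [Nset_mem, show rayForm 3 = (1, 0) from rfl,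
        show cExt ((-1 : ℤ) • c) 3 = -1 * c 3 from rfl, h4]; norm_num
    have m4 : (4 : Fin 7) ∈ Nset ((-1 : ℤ) • c) (3, 1) := by
      rw [Nset_mem, show rayForm 4 = (0, 1) from rfl,
        show cExt ((-1 : ℤ) • c) 4 = -1 * c 4 from rfl, h5]; norm_num
    have m5 : (5 : Fin 7) ∈ Nset ((-1 : ℤ) • c) (3, 1) := by
      rw [Nset_mem, show rayForm 5 = (-1, 2) from rfl,
        show cExt ((-1 : ℤ) • c) 5 = 0 from rfl]; norm_num
    have m6 : (6 : Fin 7) ∈ Nset ((-1 : ℤ) • c) (3, 1) := by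
      rw [Nset_mem, show rayForm 6 = (0, -1) from rfl,
        show cExt ((-1 : ℤ) • c) 6 = 0 from rfl]; norm_num
    apply Finset.eq_univ_iff_forall.mpr
    intro i
    fin_cases i <;> assumption
  exact ⟨⟨hc0lo, hc0hi⟩, ⟨hc1lo, hc1hi⟩, ⟨hc2lo, hc2hi⟩, hdisj⟩
end

section
/- There is no cohomology-free vector c = (c_1,c_2,c_3,c_4,c_5) ∈ ℤ⁵ with c_5 = 2 and c_4 ≥ 5. -/
lemma mem_Nset_s9 {c : Fin 5 → ℤ} {m : ℤ × ℤ} {i : Fin 7} :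
    i ∈ Nset c m ↔ (rayForm i).1 * m.1 + (rayForm i).2 * m.2 + cExt c i < 0 := by
  simp [Nset]

open Fin.NatCast in
lemma image_univ_of_six_le (a : Fin 7) (n : ℕ) (hn : 6 ≤ n) :
    ((Finset.range (n + 1)).image fun j : ℕ => a + (j : Fin 7)) = Finset.univ := by
  apply Finset.eq_univ_of_forall
  intro i
  refine Finset.mem_image.mpr ⟨(i - a).val, ?_, ?_⟩
  · have := (i - a).isLt
    exact Finset.mem_range.mpr (by omega)
  · rw [Fin.cast_val_eq_self, add_comm, sub_add_cancel]

lemma forced {S : Finset (Fin 7)} (h : IsCircularInterval S)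
    (h3 : (3 : Fin 7) ∈ S) (h6 : (6 : Fin 7) ∈ S)
    (h4 : (4 : Fin 7) ∉ S) (h5 : (5 : Fin 7) ∉ S) :
    (0 : Fin 7) ∈ S ∧ (1 : Fin 7) ∈ S ∧ (2 : Fin 7) ∈ S := by
  obtain rfl | ⟨a, n, rfl⟩ := h
  · simp at h3
  · rcases lt_or_ge n 6 with hn | hn
    · interval_cases n <;> revert h3 h6 h4 h5 <;> revert a <;> decide
    · rw [image_univ_of_six_le a n hn] at h4
      simp at h4


/-- There is no cohomology-free vector with `c₅ = 2` and `c₄ ≥ 5`. -/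
theorem no_cohomologyFree_c5_two_c4_ge_five :
    ¬ ∃ c : Fin 5 → ℤ, CohomologyFree c ∧ c 4 = 2 ∧ 5 ≤ c 3 := by
  rintro ⟨c, hfree, hc4, hc3⟩
  have H1 := hfree (4, 2) (-1) (Or.inr rfl)
  have H2 := hfree (3, 1) (-1) (Or.inr rfl)
  have m3 : (3 : Fin 7) ∈ Nset ((-1 : ℤ) • c) (4, 2) := by
    rw [mem_Nset_s9]
    show (1 : ℤ) * 4 + 0 * 2 + -1 * c 3 < 0
    omega
  have m6 : (6 : Fin 7) ∈ Nset ((-1 : ℤ) • c) (4, 2) := by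
    rw [mem_Nset_s9]
    show (0 : ℤ) * 4 + -1 * 2 + 0 < 0
    omega
  have m4 : (4 : Fin 7) ∉ Nset ((-1 : ℤ) • c) (4, 2) := by
    rw [mem_Nset_s9]
    show ¬ ((0 : ℤ) * 4 + 1 * 2 + -1 * c 4 < 0)
    omega
  have m5 : (5 : Fin 7) ∉ Nset ((-1 : ℤ) • c) (4, 2) := by
    rw [mem_Nset_s9]
    show ¬ ((-1 : ℤ) * 4 + 2 * 2 + 0 < 0)
    omega
  obtain ⟨f0, f1, f2⟩ := forced H1.1 m3 m6 m4 m5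
  rw [mem_Nset_s9] at f0 f1 f2
  have g0 : (1 : ℤ) * 4 + -1 * 2 + -1 * c 0 < 0 := f0
  have g1 : (2 : ℤ) * 4 + -1 * 2 + -1 * c 1 < 0 := f1
  have g2 : (3 : ℤ) * 4 + -1 * 2 + -1 * c 2 < 0 := f2
  apply H2.2
  apply Finset.eq_univ_of_forall
  intro i
  fin_cases i <;> rw [mem_Nset_s9]
  · show (1 : ℤ) * 3 + -1 * 1 + -1 * c 0 < 0
    omega
  · show (2 : ℤ) * 3 + -1 * 1 + -1 * c 1 < 0
    omega
  · show (3 : ℤ) * 3 + -1 * 1 + -1 * c 2 < 0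
    omega
  · show (1 : ℤ) * 3 + 0 * 1 + -1 * c 3 < 0
    omega
  · show (0 : ℤ) * 3 + 1 * 1 + -1 * c 4 < 0
    omega
  · show (-1 : ℤ) * 3 + 2 * 1 + 0 < 0
    omega
  · show (0 : ℤ) * 3 + -1 * 1 + 0 < 0
    omega
end
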